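/- Assume the B×B matrix V with entries V_{α,β} = ∏_{i=1}^D β_i^{α_i} (with the convention 0⁰ = 1) is invertible. Then for every δ ∈ B there exist real coefficients (a_β)_{β∈B} with ∑_{β∈B} |a_β| ≤ max_{β'∈B} ∑_{α∈B} |(V⁻¹)_{α,β'}| such that for all x ∈ ℝ^D: ∏_{i=1}^D x_i^{δ_i} = ∑_{β∈B} a_β · (⟨β, x⟩ + 1)^n, where ⟨β, x⟩ = ∑_{i=1}^D β_i x_i. In particular every monomial of total degree at most n is a linear combination, with ℓ¹-bounded coefficients depending only on n and D, of the functions x ↦ (⟨β,x⟩+1)^n for β ∈ B. -/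

import Mathlib

open scoped BigOperators

/-- The set `B = {β ∈ ℕ^D : β₁ + … + β_D ≤ n}` of multi-indices of total degree at most `n`. -/
def MultiIdx (D n : ℕ) : Type := {β : Fin D → ℕ // ∑ i, β i ≤ n}

noncomputable instance (D n : ℕ) : Fintype (MultiIdx D n) :=
  Fintype.ofInjective
    (fun β : MultiIdx D n => fun i => (⟨β.1 i, by
      have h1 : β.1 i ≤ ∑ j, β.1 j :=
        Finset.single_le_sum (fun _ _ => Nat.zero_le _) (Finset.mem_univ i)
      have h2 := β.2
      omega⟩ : Fin (n + 1)))
    (fun β₁ β₂ h => Subtype.ext (funext fun i => congrArg Fin.val (congrFun h i)))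

instance (D n : ℕ) : DecidableEq (MultiIdx D n) := Subtype.instDecidableEq

instance (D n : ℕ) : Nonempty (MultiIdx D n) := ⟨⟨fun _ => 0, by simp⟩⟩

/-- The multivariate Vandermonde matrix `V_{α,β} = ∏ᵢ (βᵢ)^(αᵢ)` (with `0⁰ = 1`). -/
noncomputable def vand (D n : ℕ) : Matrix (MultiIdx D n) (MultiIdx D n) ℝ :=
  Matrix.of fun α β : MultiIdx D n => ∏ i, ((β.1 i : ℝ)) ^ (α.1 i)


/-- Extend a multi-index `α` with `∑ αᵢ ≤ n` to a function on `Option (Fin D)`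
whose total sum is `n`, putting the slack at `none`. -/
def extIdx (D n : ℕ) (α : MultiIdx D n) : Option (Fin D) → ℕ :=
  fun o => o.elim (n - ∑ i, α.1 i) α.1

/-- Truncate a function on `Option (Fin D)` to a multi-index (junk value if out of range). -/
def truncIdx (D n : ℕ) (k : Option (Fin D) → ℕ) : MultiIdx D n :=
  if h : ∑ i, k (some i) ≤ n then ⟨fun i => k (some i), h⟩ else ⟨fun _ => 0, by simp⟩

lemma key_expand (D n : ℕ) (β : MultiIdx D n) (x : Fin D → ℝ) :
    ((∑ i, (β.1 i : ℝ) * x i) + 1) ^ n =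
      ∑ α : MultiIdx D n,
        (Nat.multinomial Finset.univ (extIdx D n α) : ℝ) * vand D n α β *
          ∏ i, (x i) ^ (α.1 i) := by
  have h1 : ((∑ i, (β.1 i : ℝ) * x i) + 1)
      = ∑ o : Option (Fin D), (o.elim (1 : ℝ) (fun i => (β.1 i : ℝ) * x i)) := by
    rw [Fintype.sum_option]
    simp [add_comm]
  rw [h1, Finset.sum_pow_eq_sum_piAntidiag]
  refine Finset.sum_nbij' (truncIdx D n) (extIdx D n) (fun _ _ => Finset.mem_univ _)
    ?_ ?_ ?_ ?_
  · intro α _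
    rw [Finset.mem_piAntidiag]
    refine ⟨?_, fun _ _ => Finset.mem_univ _⟩
    rw [Fintype.sum_option]
    have := α.2
    simp only [extIdx, Option.elim]
    omega
  · intro k hk
    have hs := (Finset.mem_piAntidiag.mp hk).1
    rw [Fintype.sum_option] at hs
    have hle : ∑ i, k (some i) ≤ n := by omega
    funext o
    rw [show truncIdx D n k = ⟨fun i => k (some i), hle⟩ from dif_pos hle]
    cases o with
    | none => simp only [extIdx, Option.elim]; omega
    | some i => rfl
  · intro α _
    have hle : ∑ i, extIdx D n α (some i) ≤ n := α.2
    rw [show truncIdx D n (extIdx D n α) = ⟨fun i => extIdx D n α (some i), hle⟩ from dif_pos hle]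
    exact Subtype.ext rfl
  · intro k hk
    have hs := (Finset.mem_piAntidiag.mp hk).1
    rw [Fintype.sum_option] at hs
    have hle : ∑ i, k (some i) ≤ n := by omega
    have ht : truncIdx D n k = ⟨fun i => k (some i), hle⟩ := by
      exact dif_pos hle
    have hext : extIdx D n (truncIdx D n k) = k := by
      rw [ht]; funext o
      cases o with
      | none => simp only [extIdx, Option.elim]; omega
      | some i => rfl
    rw [hext, ht, Fintype.prod_option, show vand D n ⟨fun i => k (some i), hle⟩ β = ∏ i, ((β.1 i : ℝ)) ^ k (some i) from rfl]
    simp only [Option.elim, one_pow, one_mul, vand, Matrix.of_apply, mul_pow,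
      Finset.prod_mul_distrib]
    ring

theorem monomial_in_span_of_powers (D n : ℕ) (hn : 1 ≤ n)
    (hV : IsUnit (vand D n)) (δ : MultiIdx D n) :
    ∃ a : MultiIdx D n → ℝ,
      (∑ β, |a β|) ≤
        Finset.univ.sup' Finset.univ_nonempty
          (fun β' : MultiIdx D n => ∑ α, |(vand D n)⁻¹ α β'|) ∧
      ∀ x : Fin D → ℝ,
        ∏ i, (x i) ^ (δ.1 i) =
          ∑ β : MultiIdx D n, a β * ((∑ i, (β.1 i : ℝ) * x i) + 1) ^ n := by
  set c : MultiIdx D n → ℝ := fun α => (Nat.multinomial Finset.univ (extIdx D n α) : ℝ)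
    with hc_def
  have hc1 : ∀ α, 1 ≤ c α := fun α => by
    have h := Nat.multinomial_pos (Finset.univ : Finset (Option (Fin D))) (extIdx D n α)
    simp only [hc_def]
    exact_mod_cast Nat.one_le_iff_ne_zero.mpr h.ne'
  have hc0 : c δ ≠ 0 := by have := hc1 δ; linarith
  set W := (vand D n)⁻¹ with hW_def
  refine ⟨fun β => W β δ / c δ, ?_, ?_⟩
  · calc ∑ β, |W β δ / c δ| ≤ ∑ β, |W β δ| := by
          refine Finset.sum_le_sum fun β _ => ?_
          rw [abs_div, abs_of_pos (by linarith [hc1 δ] : (0:ℝ) < c δ)]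
          exact div_le_self (abs_nonneg _) (hc1 δ)
      _ ≤ _ := Finset.le_sup' (fun β' : MultiIdx D n => ∑ α, |W α β'|)
              (Finset.mem_univ δ)
  · intro x
    symm
    have hVW : vand D n * W = 1 :=
      Matrix.mul_nonsing_inv _ ((Matrix.isUnit_iff_isUnit_det _).mp hV)
    have h2 : ∀ α, ∑ β, vand D n α β * W β δ = if α = δ then 1 else 0 := by
      intro α
      have := congrFun (congrFun hVW α) δ
      rw [Matrix.mul_apply] at this
      rw [this, Matrix.one_apply]
    calc ∑ β : MultiIdx D n, (W β δ / c δ) * ((∑ i, (β.1 i : ℝ) * x i) + 1) ^ n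
        = ∑ β : MultiIdx D n, ∑ α : MultiIdx D n,
            (W β δ / c δ) * (c α * vand D n α β * ∏ i, (x i) ^ (α.1 i)) := by
          refine Finset.sum_congr rfl fun β _ => ?_
          rw [key_expand D n β x, Finset.mul_sum]
      _ = ∑ α : MultiIdx D n, (c α / c δ * ∏ i, (x i) ^ (α.1 i)) *
            ∑ β : MultiIdx D n, vand D n α β * W β δ := by
          rw [Finset.sum_comm]
          refine Finset.sum_congr rfl fun α _ => ?_
          rw [Finset.mul_sum]
          exact Finset.sum_congr rfl fun β _ => by ring
      _ = ∏ i, (x i) ^ (δ.1 i) := by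
          simp only [h2, mul_ite, mul_one, mul_zero]
          rw [Finset.sum_ite_eq' Finset.univ δ]
          simp [hc0, Finset.mem_univ]
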